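/- If R₀ > 1 then, with C* = βκS*/(κ + B*)², one has ηC* = a₁d(1 + a₁a₂a₃μκd(1 − R₀)/(βρ)). -/

import Mathlib

/-- If `R₀ > 1` then `ηC* = a₁d(1 + a₁a₂a₃μκd(1 − R₀)/(βρ))`, where
`C* = βκS*/(κ + B*)²`. -/
theorem siqrb_etaCstar_formula
    (Λ μ β κ η d ω δ ε α₁ α₂ : ℝ)
    (hΛ : 0 < Λ) (hμ : 0 < μ) (hβ : 0 < β) (hκ : 0 < κ) (hη : 0 < η) (hd : 0 < d)
    (hω : 0 ≤ ω) (hδ : 0 ≤ δ) (hε : 0 ≤ ε) (hα₁ : 0 ≤ α₁) (hα₂ : 0 ≤ α₂)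
    (a₁ a₂ a₃ ρ D R₀ Sstar Bstar Cstar : ℝ)
    (ha₁ : a₁ = δ + α₁ + μ) (ha₂ : a₂ = ε + α₂ + μ) (ha₃ : a₃ = ω + μ)
    (hρ : ρ = Λ * η * a₂ * a₃ + κ * d * (a₁ * a₂ * a₃ - δ * ε * ω))
    (hD : D = a₁ * a₂ * a₃ * μ + β * (a₁ * a₂ * a₃ - δ * ε * ω))
    (hR₀ : R₀ = β * Λ * η / (μ * κ * d * a₁))
    (hR₀gt : 1 < R₀)
    (hS : Sstar = a₁ * ρ / (η * D))
    (hB : Bstar = β * Λ * η * a₂ * a₃ * (R₀ - 1) / (R₀ * D * d))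
    (hCstar : Cstar = β * κ * Sstar / (κ + Bstar) ^ 2) :
    η * Cstar = a₁ * d * (1 + a₁ * a₂ * a₃ * μ * κ * d * (1 - R₀) / (β * ρ)) := by
  have ha₁p : 0 < a₁ := by rw [ha₁]; linarith
  have ha₂p : 0 < a₂ := by rw [ha₂]; linarith
  have ha₃p : 0 < a₃ := by rw [ha₃]; linarith
  have h1 : δ < a₁ := by rw [ha₁]; linarith
  have h2 : ε < a₂ := by rw [ha₂]; linarith
  have h3 : ω < a₃ := by rw [ha₃]; linarith
  have hsub : 0 < a₁ * a₂ * a₃ - δ * ε * ω := by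
    have hδε : δ * ε ≤ a₁ * a₂ := mul_le_mul h1.le h2.le hε ha₁p.le
    have hh1 : δ * ε * ω ≤ a₁ * a₂ * ω := mul_le_mul_of_nonneg_right hδε hω
    have hh2 : a₁ * a₂ * ω < a₁ * a₂ * a₃ :=
      mul_lt_mul_of_pos_left h3 (mul_pos ha₁p ha₂p)
    linarith
  have hρp : 0 < ρ := by rw [hρ]; positivity
  have hDp : 0 < D := by rw [hD]; positivity
  have hR₀p : 0 < R₀ := lt_trans one_pos hR₀gt
  have hR₀' : β * Λ * η = R₀ * (μ * κ * d * a₁) := by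
    rw [hR₀]; field_simp
  have hB2 : Bstar = μ * κ * a₁ * a₂ * a₃ * (R₀ - 1) / D := by
    rw [hB, hR₀']
    field_simp
  have hkey : κ + Bstar = β * ρ / (d * D) := by
    rw [hB2]
    field_simp
    rw [hρ, hD]
    linear_combination (-(a₂ * a₃)) * hR₀'
  have hA : η * Cstar = a₁ * d * (κ * d * D / (β * ρ)) := by
    rw [hCstar, hS, hkey]
    field_simp
  have hBk : κ * d * D = β * ρ + a₁ * a₂ * a₃ * μ * κ * d * (1 - R₀) := by
    rw [hρ, hD]
    linear_combination (-(a₂ * a₃)) * hR₀'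
  rw [hA, hBk, add_div, div_self (by positivity : β * ρ ≠ 0)]
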